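/- Define the q-deformed Cartan–Weyl generators E_{ij} = q^{−(N_{i+1}+⋯+N_{j−1})} E^J_{ij} for i<j and E_{ij} = q^{(N_{i−1}+⋯+N_{j+1})} E^J_{ij} for i>j, where E^J_{ij} = (x_i/x_j)[N_j]. Then for i < j < k the q-commutator identity [E_{ij}, E_{jk}]_q := E_{ij}E_{jk} − q E_{jk}E_{ij} = E_{ik} holds. -/

import Mathlib

private theorem move_assoc {A : Type*} [Ring A] {X Y Z : A} (h : X * Y = Y * Z) :
    ∀ t : A, X * (Y * t) = Y * (Z * t) := fun t => by
  rw [← mul_assoc, h, mul_assoc]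

private theorem cancel_assoc {A : Type*} [Ring A] {X Y : A} (h : X * Y = 1) :
    ∀ t : A, X * (Y * t) = t := fun t => by
  rw [← mul_assoc, h, one_mul]

private theorem qmoves {A : Type*} [Ring A] (N X Q : Aˣ)
    (hQ : ∀ z : A, (Q : A) * z = z * Q)
    (h : (N : A) * X = (Q : A) * ((X : A) * N)) :
    ((N : A) * X = (X : A) * ((N : A) * Q)) ∧
    ((N : A) * ((X⁻¹ : Aˣ) : A) = ((X⁻¹ : Aˣ) : A) * ((N : A) * ((Q⁻¹ : Aˣ) : A))) ∧
    (((N⁻¹ : Aˣ) : A) * X = (X : A) * (((N⁻¹ : Aˣ) : A) * ((Q⁻¹ : Aˣ) : A))) ∧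
    (((N⁻¹ : Aˣ) : A) * ((X⁻¹ : Aˣ) : A)
      = ((X⁻¹ : Aˣ) : A) * (((N⁻¹ : Aˣ) : A) * Q)) := by
  have hQX : Commute Q X := Units.ext (by simpa using hQ X)
  have hQN : Commute Q N := Units.ext (by simpa using hQ N)
  have hu : N * X = X * (N * Q) := Units.ext (by
    push_cast
    rw [h, hQ, mul_assoc])
  have e : X * N = N * X * Q⁻¹ := by rw [hu]; group
  have m2u : N * X⁻¹ = X⁻¹ * (N * Q⁻¹) := by
    apply mul_left_cancel (a := X)
    rw [mul_inv_cancel_left, ← mul_assoc, e, mul_assoc N, ← hQX.inv_left.eq]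
    group
  have m3u : N⁻¹ * X = X * (N⁻¹ * Q⁻¹) := by
    apply mul_left_cancel (a := N)
    rw [mul_inv_cancel_left, ← mul_assoc, hu, ← hQN.eq]
    group
  have e2 : X * N⁻¹ = N⁻¹ * (X * Q) := by
    apply mul_left_cancel (a := N)
    rw [mul_inv_cancel_left, ← mul_assoc, hu, ← hQN.eq]
    group
  have m4u : N⁻¹ * X⁻¹ = X⁻¹ * (N⁻¹ * Q) := by
    apply mul_left_cancel (a := X)
    rw [mul_inv_cancel_left, ← mul_assoc, e2, ← hQX.eq]
    group
  refine ⟨?_, ?_, ?_, ?_⟩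
  · exact_mod_cast congrArg Units.val hu
  · exact_mod_cast congrArg Units.val m2u
  · exact_mod_cast congrArg Units.val m3u
  · exact_mod_cast congrArg Units.val m4u

/-- q-deformed Cartan–Weyl Jordan–Schwinger generators:
`E_{ij} = q^{−(N_{i+1}+⋯+N_{j−1})} E^J_{ij}` for `i<j`,
`E_{ij} = q^{+(N_{i−1}+⋯+N_{j+1})} E^J_{ij}` for `i>j`, with
`E^J_{ij} = (x_i/x_j)[N_j]`. The unit `qS s` represents `q^{∑_{t∈s} N_t}`. -/
theorem stmt_4 {A : Type*} [Ring A] (n : ℕ)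
    (q : Aˣ) (lamInv : A)
    (x qN : Fin (n + 1) → Aˣ)
    (qS : Finset (Fin (n + 1)) → Aˣ)
    (hq_central : ∀ a : A, (q : A) * a = a * (q : A))
    (hlam_central : ∀ a : A, lamInv * a = a * lamInv)
    (hlam : lamInv * ((q : A) - ((q⁻¹ : Aˣ) : A)) = 1)
    (hxx : ∀ i j, (x i : A) * (x j : A) = (x j : A) * (x i : A))
    (hNN : ∀ i j, (qN i : A) * (qN j : A) = (qN j : A) * (qN i : A))
    (hNx : ∀ i j, (qN i : A) * (x j : A)
      = (if i = j then (q : A) else 1) * ((x j : A) * (qN i : A)))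
    (hqS0 : qS ∅ = 1)
    (hqSi : ∀ (s : Finset (Fin (n + 1))) (t), t ∉ s → qS (insert t s) = qN t * qS s)
    (EJ E : Fin (n + 1) → Fin (n + 1) → A)
    (hEJ : ∀ i j, EJ i j
      = (x i : A) * (((x j)⁻¹ : Aˣ) : A)
          * (lamInv * ((qN j : A) - (((qN j)⁻¹ : Aˣ) : A))))
    (hElt : ∀ i j, i < j →
      E i j = (((qS (Finset.Ioo i j))⁻¹ : Aˣ) : A) * EJ i j)
    (hEgt : ∀ i j, j < i →
      E i j = ((qS (Finset.Ioo j i) : Aˣ) : A) * EJ i j)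
    (i j k : Fin (n + 1)) (hij : i < j) (hjk : j < k) :
    E i j * E j k - (q : A) * (E j k * E i j) = E i k := by
  have hik : i < k := hij.trans hjk
  -- membership facts
  have hiS1 : i ∉ Finset.Ioo i j := by simp
  have hjS1 : j ∉ Finset.Ioo i j := by simp
  have hkS1 : k ∉ Finset.Ioo i j := by
    simp only [Finset.mem_Ioo, not_and]
    intro _ h
    exact absurd (hjk.trans h) (lt_irrefl j)
  have hiS2 : i ∉ Finset.Ioo j k := by
    simp only [Finset.mem_Ioo, not_and]
    intro h _
    exact absurd (hij.trans h) (lt_irrefl i)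
  have hjS2 : j ∉ Finset.Ioo j k := by simp
  have hkS2 : k ∉ Finset.Ioo j k := by simp
  -- qS commutation lemmas
  have cqS_N : ∀ (s : Finset (Fin (n+1))) (t), Commute ((qS s : A)) ((qN t : A)) := by
    intro s t
    induction s using Finset.induction_on with
    | empty => rw [hqS0]; exact Commute.one_left _
    | insert _ _ hns ih =>
      rw [hqSi _ _ hns]
      push_cast
      exact Commute.mul_left (hNN _ t) ih
  have cqS_x : ∀ (s : Finset (Fin (n+1))) (m), m ∉ s → Commute ((qS s : A)) ((x m : A)) := by
    intro s
    induction s using Finset.induction_on with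
    | empty => intro m _; rw [hqS0]; exact Commute.one_left _
    | insert _ _ hns ih =>
      rename_i a s
      intro m hm
      rw [hqSi _ _ hns]
      push_cast
      have ham : a ≠ m := fun h => hm (h ▸ Finset.mem_insert_self a s)
      have h1 : (qN a : A) * (x m : A) = (x m : A) * (qN a : A) := by
        have := hNx a m
        rwa [if_neg ham, one_mul] at this
      exact Commute.mul_left h1 (ih m (fun h => hm (Finset.mem_insert_of_mem h)))
  have cqS_S : ∀ (s t : Finset (Fin (n+1))), Commute ((qS s : A)) ((qS t : A)) := by
    intro s t
    induction s using Finset.induction_on with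
    | empty => rw [hqS0]; exact Commute.one_left _
    | insert _ _ hns ih =>
      rw [hqSi _ _ hns]
      push_cast
      exact Commute.mul_left ((cqS_N t _).symm) ih
  -- qS union
  have hunion : ∀ s t : Finset (Fin (n+1)), Disjoint s t → qS (s ∪ t) = qS s * qS t := by
    intro s
    induction s using Finset.induction_on with
    | empty => intro t _; rw [Finset.empty_union, hqS0, one_mul]
    | insert _ _ hns ih =>
      rename_i a s
      intro t hd
      have hat : a ∉ t := Finset.disjoint_left.mp hd (Finset.mem_insert_self a s)
      have hst : Disjoint s t := Finset.disjoint_of_subset_left (Finset.subset_insert a s) hd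
      have haut : a ∉ s ∪ t := by
        simp only [Finset.mem_union, not_or]; exact ⟨hns, hat⟩
      rw [Finset.insert_union, hqSi _ _ haut, ih t hst, hqSi _ _ hns, mul_assoc]
  have hdisj : Disjoint (Finset.Ioo i j) (Finset.Ioo j k) := by
    rw [Finset.disjoint_left]
    intro a ha hb
    exact absurd ((Finset.mem_Ioo.mp ha).2.trans (Finset.mem_Ioo.mp hb).1) (lt_irrefl a)
  have hIoo : Finset.Ioo i k = insert j (Finset.Ioo i j ∪ Finset.Ioo j k) := by
    have h1 : i.val < j.val := hij
    have h2 : j.val < k.val := hjk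
    ext t
    simp only [Finset.mem_Ioo, Finset.mem_insert, Finset.mem_union, Fin.lt_def, Fin.ext_iff]
    omega
  have hjU : j ∉ Finset.Ioo i j ∪ Finset.Ioo j k := by
    simp only [Finset.mem_union, not_or]; exact ⟨hjS1, hjS2⟩
  have hqSik : qS (Finset.Ioo i k)
      = qN j * (qS (Finset.Ioo i j) * qS (Finset.Ioo j k)) := by
    rw [hIoo, hqSi _ _ hjU, hunion _ _ hdisj]
  have hw : ((qS (Finset.Ioo i k))⁻¹ : Aˣ)
      = (qS (Finset.Ioo j k))⁻¹ * ((qS (Finset.Ioo i j))⁻¹ * (qN j)⁻¹) := by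
    rw [hqSik]; group
  -- base commute facts (element level)
  have cb_u_v : Commute ((qS (Finset.Ioo i j) : A)) ((qS (Finset.Ioo j k) : A)) := cqS_S _ _
  have cb_u_xi : Commute ((qS (Finset.Ioo i j) : A)) ((x i : A)) := cqS_x _ _ hiS1
  have cb_u_xj : Commute ((qS (Finset.Ioo i j) : A)) ((x j : A)) := cqS_x _ _ hjS1
  have cb_u_xk : Commute ((qS (Finset.Ioo i j) : A)) ((x k : A)) := cqS_x _ _ hkS1
  have cb_u_Nj : Commute ((qS (Finset.Ioo i j) : A)) ((qN j : A)) := cqS_N _ _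
  have cb_u_Nk : Commute ((qS (Finset.Ioo i j) : A)) ((qN k : A)) := cqS_N _ _
  have cb_v_xi : Commute ((qS (Finset.Ioo j k) : A)) ((x i : A)) := cqS_x _ _ hiS2
  have cb_v_xj : Commute ((qS (Finset.Ioo j k) : A)) ((x j : A)) := cqS_x _ _ hjS2
  have cb_v_xk : Commute ((qS (Finset.Ioo j k) : A)) ((x k : A)) := cqS_x _ _ hkS2
  have cb_v_Nj : Commute ((qS (Finset.Ioo j k) : A)) ((qN j : A)) := cqS_N _ _
  have cb_v_Nk : Commute ((qS (Finset.Ioo j k) : A)) ((qN k : A)) := cqS_N _ _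
  have cb_xi_xj : Commute ((x i : A)) ((x j : A)) := hxx i j
  have cb_xi_xk : Commute ((x i : A)) ((x k : A)) := hxx i k
  have cb_xj_xk : Commute ((x j : A)) ((x k : A)) := hxx j k
  have cb_Nj_xi : Commute ((qN j : A)) ((x i : A)) := by
    have := hNx j i
    rwa [if_neg (ne_of_gt hij), one_mul] at this
  have cb_Nj_xk : Commute ((qN j : A)) ((x k : A)) := by
    have := hNx j k
    rwa [if_neg (ne_of_lt hjk), one_mul] at this
  have cb_Nk_xi : Commute ((qN k : A)) ((x i : A)) := by
    have := hNx k i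
    rwa [if_neg (ne_of_gt hik), one_mul] at this
  have cb_Nk_xj : Commute ((qN k : A)) ((x j : A)) := by
    have := hNx k j
    rwa [if_neg (ne_of_gt hjk), one_mul] at this
  have cb_Nj_Nk : Commute ((qN j : A)) ((qN k : A)) := hNN j k
  -- q-moves
  obtain ⟨mj1, mj2, mj3, mj4⟩ := qmoves (qN j) (x j) q hq_central (by simpa using hNx j j)
  obtain ⟨mk1, mk2, mk3, mk4⟩ := qmoves (qN k) (x k) q hq_central (by simpa using hNx k k)
  have amj1 := move_assoc mj1
  have amj2 := move_assoc mj2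
  have amj3 := move_assoc mj3
  have amj4 := move_assoc mj4
  have amk2 := move_assoc mk2
  have amk4 := move_assoc mk4
  -- cancellation rules
  have cc1 : ((x j : A)) * (((x j)⁻¹ : Aˣ) : A) = 1 := Units.mul_inv _
  have cc2 : (((x j)⁻¹ : Aˣ) : A) * ((x j : A)) = 1 := Units.inv_mul _
  have cc3 : ((qN j : A)) * (((qN j)⁻¹ : Aˣ) : A) = 1 := Units.mul_inv _
  have cc4 : (((qN j)⁻¹ : Aˣ) : A) * ((qN j : A)) = 1 := Units.inv_mul _
  have cc5 : ((qN k : A)) * (((qN k)⁻¹ : Aˣ) : A) = 1 := Units.mul_inv _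
  have cc6 : (((qN k)⁻¹ : Aˣ) : A) * ((qN k : A)) = 1 := Units.inv_mul _
  have cc7 : ((q : A)) * (((q⁻¹ : Aˣ) : A)) = 1 := Units.mul_inv _
  have cc8 : (((q⁻¹ : Aˣ) : A)) * ((q : A)) = 1 := Units.inv_mul _
  have acc1 := cancel_assoc cc1
  have acc2 := cancel_assoc cc2
  have acc3 := cancel_assoc cc3
  have acc4 := cancel_assoc cc4
  have acc5 := cancel_assoc cc5
  have acc6 := cancel_assoc cc6
  have acc7 := cancel_assoc cc7
  have acc8 := cancel_assoc cc8
  -- ordered commutation rules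
  have r_1_0 : (((qS (Finset.Ioo j k))⁻¹ : Aˣ) : A) * (((qS (Finset.Ioo i j))⁻¹ : Aˣ) : A) = (((qS (Finset.Ioo i j))⁻¹ : Aˣ) : A) * (((qS (Finset.Ioo j k))⁻¹ : Aˣ) : A) := (cb_u_v.units_inv_left.units_inv_right).symm.eq
  have a_1_0 := move_assoc r_1_0
  have r_2_0 : ((x i : A)) * (((qS (Finset.Ioo i j))⁻¹ : Aˣ) : A) = (((qS (Finset.Ioo i j))⁻¹ : Aˣ) : A) * ((x i : A)) := (cb_u_xi.units_inv_left).symm.eq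
  have a_2_0 := move_assoc r_2_0
  have r_2_1 : ((x i : A)) * (((qS (Finset.Ioo j k))⁻¹ : Aˣ) : A) = (((qS (Finset.Ioo j k))⁻¹ : Aˣ) : A) * ((x i : A)) := (cb_v_xi.units_inv_left).symm.eq
  have a_2_1 := move_assoc r_2_1
  have r_3_0 : ((x j : A)) * (((qS (Finset.Ioo i j))⁻¹ : Aˣ) : A) = (((qS (Finset.Ioo i j))⁻¹ : Aˣ) : A) * ((x j : A)) := (cb_u_xj.units_inv_left).symm.eq
  have a_3_0 := move_assoc r_3_0
  have r_3_1 : ((x j : A)) * (((qS (Finset.Ioo j k))⁻¹ : Aˣ) : A) = (((qS (Finset.Ioo j k))⁻¹ : Aˣ) : A) * ((x j : A)) := (cb_v_xj.units_inv_left).symm.eq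
  have a_3_1 := move_assoc r_3_1
  have r_3_2 : ((x j : A)) * ((x i : A)) = ((x i : A)) * ((x j : A)) := (cb_xi_xj).symm.eq
  have a_3_2 := move_assoc r_3_2
  have r_4_0 : (((x j)⁻¹ : Aˣ) : A) * (((qS (Finset.Ioo i j))⁻¹ : Aˣ) : A) = (((qS (Finset.Ioo i j))⁻¹ : Aˣ) : A) * (((x j)⁻¹ : Aˣ) : A) := (cb_u_xj.units_inv_left.units_inv_right).symm.eq
  have a_4_0 := move_assoc r_4_0
  have r_4_1 : (((x j)⁻¹ : Aˣ) : A) * (((qS (Finset.Ioo j k))⁻¹ : Aˣ) : A) = (((qS (Finset.Ioo j k))⁻¹ : Aˣ) : A) * (((x j)⁻¹ : Aˣ) : A) := (cb_v_xj.units_inv_left.units_inv_right).symm.eq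
  have a_4_1 := move_assoc r_4_1
  have r_4_2 : (((x j)⁻¹ : Aˣ) : A) * ((x i : A)) = ((x i : A)) * (((x j)⁻¹ : Aˣ) : A) := (cb_xi_xj.units_inv_right).symm.eq
  have a_4_2 := move_assoc r_4_2
  have r_5_0 : (((x k)⁻¹ : Aˣ) : A) * (((qS (Finset.Ioo i j))⁻¹ : Aˣ) : A) = (((qS (Finset.Ioo i j))⁻¹ : Aˣ) : A) * (((x k)⁻¹ : Aˣ) : A) := (cb_u_xk.units_inv_left.units_inv_right).symm.eq
  have a_5_0 := move_assoc r_5_0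
  have r_5_1 : (((x k)⁻¹ : Aˣ) : A) * (((qS (Finset.Ioo j k))⁻¹ : Aˣ) : A) = (((qS (Finset.Ioo j k))⁻¹ : Aˣ) : A) * (((x k)⁻¹ : Aˣ) : A) := (cb_v_xk.units_inv_left.units_inv_right).symm.eq
  have a_5_1 := move_assoc r_5_1
  have r_5_2 : (((x k)⁻¹ : Aˣ) : A) * ((x i : A)) = ((x i : A)) * (((x k)⁻¹ : Aˣ) : A) := (cb_xi_xk.units_inv_right).symm.eq
  have a_5_2 := move_assoc r_5_2
  have r_5_3 : (((x k)⁻¹ : Aˣ) : A) * ((x j : A)) = ((x j : A)) * (((x k)⁻¹ : Aˣ) : A) := (cb_xj_xk.units_inv_right).symm.eq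
  have a_5_3 := move_assoc r_5_3
  have r_5_4 : (((x k)⁻¹ : Aˣ) : A) * (((x j)⁻¹ : Aˣ) : A) = (((x j)⁻¹ : Aˣ) : A) * (((x k)⁻¹ : Aˣ) : A) := (cb_xj_xk.units_inv_left.units_inv_right).symm.eq
  have a_5_4 := move_assoc r_5_4
  have r_6_0 : ((qN j : A)) * (((qS (Finset.Ioo i j))⁻¹ : Aˣ) : A) = (((qS (Finset.Ioo i j))⁻¹ : Aˣ) : A) * ((qN j : A)) := (cb_u_Nj.units_inv_left).symm.eq
  have a_6_0 := move_assoc r_6_0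
  have r_6_1 : ((qN j : A)) * (((qS (Finset.Ioo j k))⁻¹ : Aˣ) : A) = (((qS (Finset.Ioo j k))⁻¹ : Aˣ) : A) * ((qN j : A)) := (cb_v_Nj.units_inv_left).symm.eq
  have a_6_1 := move_assoc r_6_1
  have r_6_2 : ((qN j : A)) * ((x i : A)) = ((x i : A)) * ((qN j : A)) := (cb_Nj_xi).eq
  have a_6_2 := move_assoc r_6_2
  have r_6_5 : ((qN j : A)) * (((x k)⁻¹ : Aˣ) : A) = (((x k)⁻¹ : Aˣ) : A) * ((qN j : A)) := (cb_Nj_xk.units_inv_right).eq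
  have a_6_5 := move_assoc r_6_5
  have r_7_0 : (((qN j)⁻¹ : Aˣ) : A) * (((qS (Finset.Ioo i j))⁻¹ : Aˣ) : A) = (((qS (Finset.Ioo i j))⁻¹ : Aˣ) : A) * (((qN j)⁻¹ : Aˣ) : A) := (cb_u_Nj.units_inv_left.units_inv_right).symm.eq
  have a_7_0 := move_assoc r_7_0
  have r_7_1 : (((qN j)⁻¹ : Aˣ) : A) * (((qS (Finset.Ioo j k))⁻¹ : Aˣ) : A) = (((qS (Finset.Ioo j k))⁻¹ : Aˣ) : A) * (((qN j)⁻¹ : Aˣ) : A) := (cb_v_Nj.units_inv_left.units_inv_right).symm.eq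
  have a_7_1 := move_assoc r_7_1
  have r_7_2 : (((qN j)⁻¹ : Aˣ) : A) * ((x i : A)) = ((x i : A)) * (((qN j)⁻¹ : Aˣ) : A) := (cb_Nj_xi.units_inv_left).eq
  have a_7_2 := move_assoc r_7_2
  have r_7_5 : (((qN j)⁻¹ : Aˣ) : A) * (((x k)⁻¹ : Aˣ) : A) = (((x k)⁻¹ : Aˣ) : A) * (((qN j)⁻¹ : Aˣ) : A) := (cb_Nj_xk.units_inv_left.units_inv_right).eq
  have a_7_5 := move_assoc r_7_5
  have r_8_0 : ((qN k : A)) * (((qS (Finset.Ioo i j))⁻¹ : Aˣ) : A) = (((qS (Finset.Ioo i j))⁻¹ : Aˣ) : A) * ((qN k : A)) := (cb_u_Nk.units_inv_left).symm.eq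
  have a_8_0 := move_assoc r_8_0
  have r_8_1 : ((qN k : A)) * (((qS (Finset.Ioo j k))⁻¹ : Aˣ) : A) = (((qS (Finset.Ioo j k))⁻¹ : Aˣ) : A) * ((qN k : A)) := (cb_v_Nk.units_inv_left).symm.eq
  have a_8_1 := move_assoc r_8_1
  have r_8_2 : ((qN k : A)) * ((x i : A)) = ((x i : A)) * ((qN k : A)) := (cb_Nk_xi).eq
  have a_8_2 := move_assoc r_8_2
  have r_8_3 : ((qN k : A)) * ((x j : A)) = ((x j : A)) * ((qN k : A)) := (cb_Nk_xj).eq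
  have a_8_3 := move_assoc r_8_3
  have r_8_4 : ((qN k : A)) * (((x j)⁻¹ : Aˣ) : A) = (((x j)⁻¹ : Aˣ) : A) * ((qN k : A)) := (cb_Nk_xj.units_inv_right).eq
  have a_8_4 := move_assoc r_8_4
  have r_8_6 : ((qN k : A)) * ((qN j : A)) = ((qN j : A)) * ((qN k : A)) := (cb_Nj_Nk).symm.eq
  have a_8_6 := move_assoc r_8_6
  have r_8_7 : ((qN k : A)) * (((qN j)⁻¹ : Aˣ) : A) = (((qN j)⁻¹ : Aˣ) : A) * ((qN k : A)) := (cb_Nj_Nk.units_inv_left).symm.eq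
  have a_8_7 := move_assoc r_8_7
  have r_9_0 : (((qN k)⁻¹ : Aˣ) : A) * (((qS (Finset.Ioo i j))⁻¹ : Aˣ) : A) = (((qS (Finset.Ioo i j))⁻¹ : Aˣ) : A) * (((qN k)⁻¹ : Aˣ) : A) := (cb_u_Nk.units_inv_left.units_inv_right).symm.eq
  have a_9_0 := move_assoc r_9_0
  have r_9_1 : (((qN k)⁻¹ : Aˣ) : A) * (((qS (Finset.Ioo j k))⁻¹ : Aˣ) : A) = (((qS (Finset.Ioo j k))⁻¹ : Aˣ) : A) * (((qN k)⁻¹ : Aˣ) : A) := (cb_v_Nk.units_inv_left.units_inv_right).symm.eq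
  have a_9_1 := move_assoc r_9_1
  have r_9_2 : (((qN k)⁻¹ : Aˣ) : A) * ((x i : A)) = ((x i : A)) * (((qN k)⁻¹ : Aˣ) : A) := (cb_Nk_xi.units_inv_left).eq
  have a_9_2 := move_assoc r_9_2
  have r_9_3 : (((qN k)⁻¹ : Aˣ) : A) * ((x j : A)) = ((x j : A)) * (((qN k)⁻¹ : Aˣ) : A) := (cb_Nk_xj.units_inv_left).eq
  have a_9_3 := move_assoc r_9_3
  have r_9_4 : (((qN k)⁻¹ : Aˣ) : A) * (((x j)⁻¹ : Aˣ) : A) = (((x j)⁻¹ : Aˣ) : A) * (((qN k)⁻¹ : Aˣ) : A) := (cb_Nk_xj.units_inv_left.units_inv_right).eq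
  have a_9_4 := move_assoc r_9_4
  have r_9_6 : (((qN k)⁻¹ : Aˣ) : A) * ((qN j : A)) = ((qN j : A)) * (((qN k)⁻¹ : Aˣ) : A) := (cb_Nj_Nk.units_inv_right).symm.eq
  have a_9_6 := move_assoc r_9_6
  have r_9_7 : (((qN k)⁻¹ : Aˣ) : A) * (((qN j)⁻¹ : Aˣ) : A) = (((qN j)⁻¹ : Aˣ) : A) * (((qN k)⁻¹ : Aˣ) : A) := (cb_Nj_Nk.units_inv_left.units_inv_right).symm.eq
  have a_9_7 := move_assoc r_9_7
  have r_10_0 : lamInv * (((qS (Finset.Ioo i j))⁻¹ : Aˣ) : A) = (((qS (Finset.Ioo i j))⁻¹ : Aˣ) : A) * lamInv := hlam_central (((qS (Finset.Ioo i j))⁻¹ : Aˣ) : A)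
  have a_10_0 := move_assoc r_10_0
  have r_10_1 : lamInv * (((qS (Finset.Ioo j k))⁻¹ : Aˣ) : A) = (((qS (Finset.Ioo j k))⁻¹ : Aˣ) : A) * lamInv := hlam_central (((qS (Finset.Ioo j k))⁻¹ : Aˣ) : A)
  have a_10_1 := move_assoc r_10_1
  have r_10_2 : lamInv * ((x i : A)) = ((x i : A)) * lamInv := hlam_central ((x i : A))
  have a_10_2 := move_assoc r_10_2
  have r_10_3 : lamInv * ((x j : A)) = ((x j : A)) * lamInv := hlam_central ((x j : A))
  have a_10_3 := move_assoc r_10_3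
  have r_10_4 : lamInv * (((x j)⁻¹ : Aˣ) : A) = (((x j)⁻¹ : Aˣ) : A) * lamInv := hlam_central (((x j)⁻¹ : Aˣ) : A)
  have a_10_4 := move_assoc r_10_4
  have r_10_5 : lamInv * (((x k)⁻¹ : Aˣ) : A) = (((x k)⁻¹ : Aˣ) : A) * lamInv := hlam_central (((x k)⁻¹ : Aˣ) : A)
  have a_10_5 := move_assoc r_10_5
  have r_10_6 : lamInv * ((qN j : A)) = ((qN j : A)) * lamInv := hlam_central ((qN j : A))
  have a_10_6 := move_assoc r_10_6
  have r_10_7 : lamInv * (((qN j)⁻¹ : Aˣ) : A) = (((qN j)⁻¹ : Aˣ) : A) * lamInv := hlam_central (((qN j)⁻¹ : Aˣ) : A)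
  have a_10_7 := move_assoc r_10_7
  have r_10_8 : lamInv * ((qN k : A)) = ((qN k : A)) * lamInv := hlam_central ((qN k : A))
  have a_10_8 := move_assoc r_10_8
  have r_10_9 : lamInv * (((qN k)⁻¹ : Aˣ) : A) = (((qN k)⁻¹ : Aˣ) : A) * lamInv := hlam_central (((qN k)⁻¹ : Aˣ) : A)
  have a_10_9 := move_assoc r_10_9
  have r_11_0 : ((q : A)) * (((qS (Finset.Ioo i j))⁻¹ : Aˣ) : A) = (((qS (Finset.Ioo i j))⁻¹ : Aˣ) : A) * ((q : A)) := hq_central (((qS (Finset.Ioo i j))⁻¹ : Aˣ) : A)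
  have a_11_0 := move_assoc r_11_0
  have r_11_1 : ((q : A)) * (((qS (Finset.Ioo j k))⁻¹ : Aˣ) : A) = (((qS (Finset.Ioo j k))⁻¹ : Aˣ) : A) * ((q : A)) := hq_central (((qS (Finset.Ioo j k))⁻¹ : Aˣ) : A)
  have a_11_1 := move_assoc r_11_1
  have r_11_2 : ((q : A)) * ((x i : A)) = ((x i : A)) * ((q : A)) := hq_central ((x i : A))
  have a_11_2 := move_assoc r_11_2
  have r_11_3 : ((q : A)) * ((x j : A)) = ((x j : A)) * ((q : A)) := hq_central ((x j : A))
  have a_11_3 := move_assoc r_11_3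
  have r_11_4 : ((q : A)) * (((x j)⁻¹ : Aˣ) : A) = (((x j)⁻¹ : Aˣ) : A) * ((q : A)) := hq_central (((x j)⁻¹ : Aˣ) : A)
  have a_11_4 := move_assoc r_11_4
  have r_11_5 : ((q : A)) * (((x k)⁻¹ : Aˣ) : A) = (((x k)⁻¹ : Aˣ) : A) * ((q : A)) := hq_central (((x k)⁻¹ : Aˣ) : A)
  have a_11_5 := move_assoc r_11_5
  have r_11_6 : ((q : A)) * ((qN j : A)) = ((qN j : A)) * ((q : A)) := hq_central ((qN j : A))
  have a_11_6 := move_assoc r_11_6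
  have r_11_7 : ((q : A)) * (((qN j)⁻¹ : Aˣ) : A) = (((qN j)⁻¹ : Aˣ) : A) * ((q : A)) := hq_central (((qN j)⁻¹ : Aˣ) : A)
  have a_11_7 := move_assoc r_11_7
  have r_11_8 : ((q : A)) * ((qN k : A)) = ((qN k : A)) * ((q : A)) := hq_central ((qN k : A))
  have a_11_8 := move_assoc r_11_8
  have r_11_9 : ((q : A)) * (((qN k)⁻¹ : Aˣ) : A) = (((qN k)⁻¹ : Aˣ) : A) * ((q : A)) := hq_central (((qN k)⁻¹ : Aˣ) : A)
  have a_11_9 := move_assoc r_11_9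
  have r_11_10 : ((q : A)) * lamInv = lamInv * ((q : A)) := hq_central lamInv
  have a_11_10 := move_assoc r_11_10
  have r_12_0 : (((q⁻¹ : Aˣ) : A)) * (((qS (Finset.Ioo i j))⁻¹ : Aˣ) : A) = (((qS (Finset.Ioo i j))⁻¹ : Aˣ) : A) * (((q⁻¹ : Aˣ) : A)) := (Commute.units_inv_left (u := q) (hq_central (((qS (Finset.Ioo i j))⁻¹ : Aˣ) : A))).eq
  have a_12_0 := move_assoc r_12_0
  have r_12_1 : (((q⁻¹ : Aˣ) : A)) * (((qS (Finset.Ioo j k))⁻¹ : Aˣ) : A) = (((qS (Finset.Ioo j k))⁻¹ : Aˣ) : A) * (((q⁻¹ : Aˣ) : A)) := (Commute.units_inv_left (u := q) (hq_central (((qS (Finset.Ioo j k))⁻¹ : Aˣ) : A))).eq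
  have a_12_1 := move_assoc r_12_1
  have r_12_2 : (((q⁻¹ : Aˣ) : A)) * ((x i : A)) = ((x i : A)) * (((q⁻¹ : Aˣ) : A)) := (Commute.units_inv_left (u := q) (hq_central ((x i : A)))).eq
  have a_12_2 := move_assoc r_12_2
  have r_12_3 : (((q⁻¹ : Aˣ) : A)) * ((x j : A)) = ((x j : A)) * (((q⁻¹ : Aˣ) : A)) := (Commute.units_inv_left (u := q) (hq_central ((x j : A)))).eq
  have a_12_3 := move_assoc r_12_3
  have r_12_4 : (((q⁻¹ : Aˣ) : A)) * (((x j)⁻¹ : Aˣ) : A) = (((x j)⁻¹ : Aˣ) : A) * (((q⁻¹ : Aˣ) : A)) := (Commute.units_inv_left (u := q) (hq_central (((x j)⁻¹ : Aˣ) : A))).eq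
  have a_12_4 := move_assoc r_12_4
  have r_12_5 : (((q⁻¹ : Aˣ) : A)) * (((x k)⁻¹ : Aˣ) : A) = (((x k)⁻¹ : Aˣ) : A) * (((q⁻¹ : Aˣ) : A)) := (Commute.units_inv_left (u := q) (hq_central (((x k)⁻¹ : Aˣ) : A))).eq
  have a_12_5 := move_assoc r_12_5
  have r_12_6 : (((q⁻¹ : Aˣ) : A)) * ((qN j : A)) = ((qN j : A)) * (((q⁻¹ : Aˣ) : A)) := (Commute.units_inv_left (u := q) (hq_central ((qN j : A)))).eq
  have a_12_6 := move_assoc r_12_6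
  have r_12_7 : (((q⁻¹ : Aˣ) : A)) * (((qN j)⁻¹ : Aˣ) : A) = (((qN j)⁻¹ : Aˣ) : A) * (((q⁻¹ : Aˣ) : A)) := (Commute.units_inv_left (u := q) (hq_central (((qN j)⁻¹ : Aˣ) : A))).eq
  have a_12_7 := move_assoc r_12_7
  have r_12_8 : (((q⁻¹ : Aˣ) : A)) * ((qN k : A)) = ((qN k : A)) * (((q⁻¹ : Aˣ) : A)) := (Commute.units_inv_left (u := q) (hq_central ((qN k : A)))).eq
  have a_12_8 := move_assoc r_12_8
  have r_12_9 : (((q⁻¹ : Aˣ) : A)) * (((qN k)⁻¹ : Aˣ) : A) = (((qN k)⁻¹ : Aˣ) : A) * (((q⁻¹ : Aˣ) : A)) := (Commute.units_inv_left (u := q) (hq_central (((qN k)⁻¹ : Aˣ) : A))).eq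
  have a_12_9 := move_assoc r_12_9
  have r_12_10 : (((q⁻¹ : Aˣ) : A)) * lamInv = lamInv * (((q⁻¹ : Aˣ) : A)) := (Commute.units_inv_left (u := q) (hq_central lamInv)).eq
  have a_12_10 := move_assoc r_12_10
  -- main computation
  have h1 : E i j * E j k = (((qS (Finset.Ioo i j))⁻¹ : Aˣ) : A) * ((((qS (Finset.Ioo j k))⁻¹ : Aˣ) : A) * (((x i : A)) * ((((x k)⁻¹ : Aˣ) : A) * (((qN j : A)) * (((qN k : A)) * (lamInv * (lamInv * ((q : A))))))))) - (((qS (Finset.Ioo i j))⁻¹ : Aˣ) : A) * ((((qS (Finset.Ioo j k))⁻¹ : Aˣ) : A) * (((x i : A)) * ((((x k)⁻¹ : Aˣ) : A) * (((qN j : A)) * ((((qN k)⁻¹ : Aˣ) : A) * (lamInv * (lamInv * ((q : A))))))))) - (((qS (Finset.Ioo i j))⁻¹ : Aˣ) : A) * ((((qS (Finset.Ioo j k))⁻¹ : Aˣ) : A) * (((x i : A)) * ((((x k)⁻¹ : Aˣ) : A) * ((((qN j)⁻¹ : Aˣ) : A) * (((qN k : A)) * (lamInv * (lamInv * (((q⁻¹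 : Aˣ) : A))))))))) + (((qS (Finset.Ioo i j))⁻¹ : Aˣ) : A) * ((((qS (Finset.Ioo j k))⁻¹ : Aˣ) : A) * (((x i : A)) * ((((x k)⁻¹ : Aˣ) : A) * ((((qN j)⁻¹ : Aˣ) : A) * ((((qN k)⁻¹ : Aˣ) : A) * (lamInv * (lamInv * (((q⁻¹ : Aˣ) : A))))))))) := by
    rw [hElt i j hij, hElt j k hjk, hEJ, hEJ]
    simp only [mul_assoc, mul_sub, sub_mul, mul_one, one_mul, mj1, mj2, mj3, mj4, mk2, mk4, amj1, amj2, amj3, amj4, amk2, amk4, cc1, cc2, cc3, cc4, cc5, cc6, cc7, cc8, acc1, acc2, acc3, acc4, acc5, acc6, acc7, acc8, r_1_0, a_1_0, r_2_0, a_2_0, r_2_1, a_2_1, r_3_0, a_3_0, r_3_1, a_3_1, r_3_2, a_3_2, r_4_0, a_4_0, r_4_1, a_4_1, r_4_2, a_4_2, r_5_0, a_5_0, r_5_1, a_5_1, r_5_2, a_5_2, r_5_3, a_5_3, r_5_4, a_5_4, r_6_0, a_6_0, r_6_1, a_6_1, r_6_2, a_6_2, r_6_5, a_6_5, r_7_0,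 a_7_0, r_7_1, a_7_1, r_7_2, a_7_2, r_7_5, a_7_5, r_8_0, a_8_0, r_8_1, a_8_1, r_8_2, a_8_2, r_8_3, a_8_3, r_8_4, a_8_4, r_8_6, a_8_6, r_8_7, a_8_7, r_9_0, a_9_0, r_9_1, a_9_1, r_9_2, a_9_2, r_9_3, a_9_3, r_9_4, a_9_4, r_9_6, a_9_6, r_9_7, a_9_7, r_10_0, a_10_0, r_10_1, a_10_1, r_10_2, a_10_2, r_10_3, a_10_3, r_10_4, a_10_4, r_10_5, a_10_5, r_10_6, a_10_6, r_10_7, a_10_7, r_10_8, a_10_8, r_10_9, a_10_9, r_11_0, a_11_0, r_11_1, a_11_1, r_11_2, a_11_2, r_11_3, a_11_3, r_11_4, a_11_4, r_11_5, a_11_5, r_11_6, a_11_6, r_11_7, a_11_7, r_11_8, a_11_8, r_11_9, a_11_9, r_11_10, a_11_10, r_12_0, a_12_0, r_12_1, a_12_1, r_12_2, a_12_2, r_12_3, a_12_3, r_12_4, a_12_4, r_12_5, a_12_5, r_12_6, a_12_6, r_12_7, a_12_7, r_12_8, a_12_8, r_12_9, a_12_9, r_12_10, a_12_10]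
    abel1
  have h2 : (q : A) * (E j k * E i j) = (((qS (Finset.Ioo i j))⁻¹ : Aˣ) : A) * ((((qS (Finset.Ioo j k))⁻¹ : Aˣ) : A) * (((x i : A)) * ((((x k)⁻¹ : Aˣ) : A) * (((qN j : A)) * (((qN k : A)) * (lamInv * (lamInv * ((q : A))))))))) - (((qS (Finset.Ioo i j))⁻¹ : Aˣ) : A) * ((((qS (Finset.Ioo j k))⁻¹ : Aˣ) : A) * (((x i : A)) * ((((x k)⁻¹ : Aˣ) : A) * (((qN j : A)) * ((((qN k)⁻¹ : Aˣ) : A) * (lamInv * (lamInv * ((q : A))))))))) - (((qS (Finset.Ioo i j))⁻¹ : Aˣ) : A) * ((((qS (Finset.Ioo j k))⁻¹ : Aˣ) : A) * (((x i : A)) * ((((x k)⁻¹ : Aˣ) : A) * ((((qN j)⁻¹ : Aˣ) : A) * (((qN k : A)) * (lamInv * (lamInv * ((q : A))))))))) + (((qS (Finset.Ioo i j))⁻¹ : Aˣ) : A) * ((((qS (Finset.Ioo j k))⁻¹ : Aˣ) : A) * (((x i : A)) * ((((x k)⁻¹ : Aˣ) : A) * ((((qN j)⁻¹ : Aˣ)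 : A) * ((((qN k)⁻¹ : Aˣ) : A) * (lamInv * (lamInv * ((q : A))))))))) := by
    rw [hElt j k hjk, hElt i j hij, hEJ, hEJ]
    simp only [mul_assoc, mul_sub, sub_mul, mul_one, one_mul, mj1, mj2, mj3, mj4, mk2, mk4, amj1, amj2, amj3, amj4, amk2, amk4, cc1, cc2, cc3, cc4, cc5, cc6, cc7, cc8, acc1, acc2, acc3, acc4, acc5, acc6, acc7, acc8, r_1_0, a_1_0, r_2_0, a_2_0, r_2_1, a_2_1, r_3_0, a_3_0, r_3_1, a_3_1, r_3_2, a_3_2, r_4_0, a_4_0, r_4_1, a_4_1, r_4_2, a_4_2, r_5_0, a_5_0, r_5_1, a_5_1, r_5_2, a_5_2, r_5_3, a_5_3, r_5_4, a_5_4, r_6_0, a_6_0, r_6_1, a_6_1, r_6_2, a_6_2, r_6_5, a_6_5, r_7_0, a_7_0, r_7_1, a_7_1, r_7_2, a_7_2, r_7_5, a_7_5, r_8_0, a_8_0, r_8_1, a_8_1, r_8_2, a_8_2, r_8_3, a_8_3, r_8_4, a_8_4, r_8_6, a_8_6, r_8_7, a_8_7, r_9_0, a_9_0, r_9_1, a_9_1,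 r_9_2, a_9_2, r_9_3, a_9_3, r_9_4, a_9_4, r_9_6, a_9_6, r_9_7, a_9_7, r_10_0, a_10_0, r_10_1, a_10_1, r_10_2, a_10_2, r_10_3, a_10_3, r_10_4, a_10_4, r_10_5, a_10_5, r_10_6, a_10_6, r_10_7, a_10_7, r_10_8, a_10_8, r_10_9, a_10_9, r_11_0, a_11_0, r_11_1, a_11_1, r_11_2, a_11_2, r_11_3, a_11_3, r_11_4, a_11_4, r_11_5, a_11_5, r_11_6, a_11_6, r_11_7, a_11_7, r_11_8, a_11_8, r_11_9, a_11_9, r_11_10, a_11_10, r_12_0, a_12_0, r_12_1, a_12_1, r_12_2, a_12_2, r_12_3, a_12_3, r_12_4, a_12_4, r_12_5, a_12_5, r_12_6, a_12_6, r_12_7, a_12_7, r_12_8, a_12_8, r_12_9, a_12_9, r_12_10, a_12_10]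
    abel1
  have h3 : E i k = (((qS (Finset.Ioo i j))⁻¹ : Aˣ) : A) * ((((qS (Finset.Ioo j k))⁻¹ : Aˣ) : A) * (((x i : A)) * ((((x k)⁻¹ : Aˣ) : A) * ((((qN j)⁻¹ : Aˣ) : A) * (((qN k : A)) * lamInv))))) - (((qS (Finset.Ioo i j))⁻¹ : Aˣ) : A) * ((((qS (Finset.Ioo j k))⁻¹ : Aˣ) : A) * (((x i : A)) * ((((x k)⁻¹ : Aˣ) : A) * ((((qN j)⁻¹ : Aˣ) : A) * ((((qN k)⁻¹ : Aˣ) : A) * lamInv))))) := by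
    rw [hElt i k hik, hw, hEJ]
    push_cast
    simp only [mul_assoc, mul_sub, sub_mul, mul_one, one_mul, mj1, mj2, mj3, mj4, mk2, mk4, amj1, amj2, amj3, amj4, amk2, amk4, cc1, cc2, cc3, cc4, cc5, cc6, cc7, cc8, acc1, acc2, acc3, acc4, acc5, acc6, acc7, acc8, r_1_0, a_1_0, r_2_0, a_2_0, r_2_1, a_2_1, r_3_0, a_3_0, r_3_1, a_3_1, r_3_2, a_3_2, r_4_0, a_4_0, r_4_1, a_4_1, r_4_2, a_4_2, r_5_0, a_5_0, r_5_1, a_5_1, r_5_2, a_5_2, r_5_3, a_5_3, r_5_4, a_5_4, r_6_0, a_6_0, r_6_1, a_6_1, r_6_2, a_6_2, r_6_5, a_6_5, r_7_0, a_7_0, r_7_1, a_7_1, r_7_2, a_7_2, r_7_5, a_7_5, r_8_0, a_8_0, r_8_1, a_8_1, r_8_2, a_8_2, r_8_3, a_8_3, r_8_4, a_8_4, r_8_6, a_8_6, r_8_7, a_8_7, r_9_0, a_9_0, r_9_1, a_9_1, r_9_2, a_9_2, r_9_3, a_9_3, r_9_4, a_9_4, r_9_6, a_9_6, r_9_7,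 a_9_7, r_10_0, a_10_0, r_10_1, a_10_1, r_10_2, a_10_2, r_10_3, a_10_3, r_10_4, a_10_4, r_10_5, a_10_5, r_10_6, a_10_6, r_10_7, a_10_7, r_10_8, a_10_8, r_10_9, a_10_9, r_11_0, a_11_0, r_11_1, a_11_1, r_11_2, a_11_2, r_11_3, a_11_3, r_11_4, a_11_4, r_11_5, a_11_5, r_11_6, a_11_6, r_11_7, a_11_7, r_11_8, a_11_8, r_11_9, a_11_9, r_11_10, a_11_10, r_12_0, a_12_0, r_12_1, a_12_1, r_12_2, a_12_2, r_12_3, a_12_3, r_12_4, a_12_4, r_12_5, a_12_5, r_12_6, a_12_6, r_12_7, a_12_7, r_12_8, a_12_8, r_12_9, a_12_9, r_12_10, a_12_10]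
  have hkey : lamInv * (lamInv * ((q : A))) - lamInv * (lamInv * (((q⁻¹ : Aˣ) : A)))
      = lamInv := by
    rw [← mul_sub, ← mul_sub, hlam, mul_one]
  have e1 : (((qS (Finset.Ioo i j))⁻¹ : Aˣ) : A) * ((((qS (Finset.Ioo j k))⁻¹ : Aˣ) : A) * (((x i : A)) * ((((x k)⁻¹ : Aˣ) : A) * ((((qN j)⁻¹ : Aˣ) : A) * (((qN k : A)) * (lamInv * (lamInv * ((q : A))))))))) - (((qS (Finset.Ioo i j))⁻¹ : Aˣ) : A) * ((((qS (Finset.Ioo j k))⁻¹ : Aˣ) : A) * (((x i : A)) * ((((x k)⁻¹ : Aˣ) : A) * ((((qN j)⁻¹ : Aˣ) : A) * (((qN k : A)) * (lamInv * (lamInv * (((q⁻¹ : Aˣ) : A))))))))) = (((qS (Finset.Ioo i j))⁻¹ : Aˣ) : A) * ((((qS (Finset.Ioo j k))⁻¹ : Aˣ) : A) * (((x i : A)) * ((((x k)⁻¹ : Aˣ) : A) * ((((qN j)⁻¹ : Aˣ) : A) * (((qN k : A)) * lamInv))))) := by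
    rw [← mul_sub, ← mul_sub, ← mul_sub, ← mul_sub, ← mul_sub, ← mul_sub, hkey]
  have e2 : (((qS (Finset.Ioo i j))⁻¹ : Aˣ) : A) * ((((qS (Finset.Ioo j k))⁻¹ : Aˣ) : A) * (((x i : A)) * ((((x k)⁻¹ : Aˣ) : A) * ((((qN j)⁻¹ : Aˣ) : A) * ((((qN k)⁻¹ : Aˣ) : A) * (lamInv * (lamInv * ((q : A))))))))) - (((qS (Finset.Ioo i j))⁻¹ : Aˣ) : A) * ((((qS (Finset.Ioo j k))⁻¹ : Aˣ) : A) * (((x i : A)) * ((((x k)⁻¹ : Aˣ) : A) * ((((qN j)⁻¹ : Aˣ) : A) * ((((qN k)⁻¹ : Aˣ) : A) * (lamInv * (lamInv * (((q⁻¹ : Aˣ) : A))))))))) = (((qS (Finset.Ioo i j))⁻¹ : Aˣ) : A) * ((((qS (Finset.Ioo j k))⁻¹ : Aˣ) : A) * (((x i : A)) * ((((x k)⁻¹ : Aˣ) : A) * ((((qN j)⁻¹ : Aˣ) : A) * ((((qN k)⁻¹ : Aˣ) : A) * lamInv))))) := by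
    rw [← mul_sub, ← mul_sub, ← mul_sub, ← mul_sub, ← mul_sub, ← mul_sub, hkey]
  rw [h1, h2, h3, ← e1, ← e2]
  abel
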